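/- Let G be a finite abelian group, F a field containing a primitive |G|-th root of unity, R = ⊕_{g∈G} R_g a G-graded algebra, H ≤ G and Λ ≤ Ĝ subgroups with H = Λ^⊥. Then an element a ∈ R is homogeneous in the induced G/H-grading (with components R_{gH} = ⊕_{h∈H} R_{gh}) if and only if a is a common eigenvector for the action of all χ ∈ Λ. A subspace V ⊆ R is G/H-graded if and only if Λ * V ⊆ V. -/

import Mathlib

set_option linter.unusedSectionVars false
set_option maxHeartbeats 1000000

/-- The annihilator `Λ^⊥ = {g ∈ G : λ(g) = 1 for all λ ∈ Λ}` of a set of characters. -/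
def perpSubgroup {G F : Type*} [CommGroup G] [Field F] (Λ : Subgroup (G →* Fˣ)) :
    Subgroup G where
  carrier := {g | ∀ χ ∈ Λ, χ g = 1}
  one_mem' := by intro χ hχ; simp
  mul_mem' := by intro a b ha hb χ hχ; rw [map_mul, ha χ hχ, hb χ hχ, mul_one]
  inv_mem' := by intro a ha χ hχ; rw [map_inv, ha χ hχ, inv_one]

section Aux
variable {F G R : Type*} [Field F] [CommGroup G] [Fintype G] [DecidableEq G]
    [AddCommGroup R] [Module F R]
    (Rg : G → Submodule F R) (hdec : DirectSum.IsInternal Rg)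

noncomputable def eDec : (DirectSum G fun g => ↥(Rg g)) ≃ₗ[F] R :=
  LinearEquiv.ofBijective (DirectSum.coeLinearMap Rg) hdec

noncomputable def projg (g : G) : R →ₗ[F] R :=
  (Rg g).subtype ∘ₗ (DirectSum.component F G (fun g => Rg g) g) ∘ₗ ((eDec Rg hdec).symm : R →ₗ[F] DirectSum G fun g => ↥(Rg g))

theorem projg_mem (g : G) (a : R) : projg Rg hdec g a ∈ Rg g := (((eDec Rg hdec).symm a) g).2

theorem eDec_apply (x : DirectSum G fun g => ↥(Rg g)) :
    eDec Rg hdec x = DirectSum.coeLinearMap Rg x := rfl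

theorem sum_projg (a : R) : ∑ g, projg Rg hdec g a = a := by
  conv_rhs => rw [← (eDec Rg hdec).apply_symm_apply a]
  set x := (eDec Rg hdec).symm a
  rw [eDec_apply, ← DirectSum.sum_univ_of x, map_sum]
  refine Finset.sum_congr rfl fun g _ => ?_
  simp only [DirectSum.coeLinearMap_of]
  rfl

theorem projg_of_mem {g g' : G} {a : R} (ha : a ∈ Rg g) :
    projg Rg hdec g' a = if g' = g then a else 0 := by
  have h : (eDec Rg hdec).symm a = DirectSum.of (fun g => ↥(Rg g)) g ⟨a, ha⟩ := by
    rw [LinearEquiv.symm_apply_eq, eDec_apply, DirectSum.coeLinearMap_of]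
  show (Rg g').subtype ((DirectSum.component F G (fun g => ↥(Rg g)) g') ((eDec Rg hdec).symm a)) = _
  rw [h]
  have : (DirectSum.component F G (fun g => ↥(Rg g)) g') (DirectSum.of (fun g => ↥(Rg g)) g ⟨a, ha⟩)
      = (DirectSum.of (fun g => ↥(Rg g)) g ⟨a, ha⟩) g' := rfl
  rw [this, DirectSum.of_apply]
  rcases eq_or_ne g' g with h' | h'
  · subst h'; simp
  · rw [dif_neg (Ne.symm h'), if_neg h']; simp

variable (act : (G →* Fˣ) → R →ₗ[F] R)
    (hact : ∀ (χ : G →* Fˣ) (g : G), ∀ x ∈ Rg g, act χ x = (χ g : F) • x)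

include hact in
/-- act expressed through components. -/
theorem act_eq_sum (χ : G →* Fˣ) (a : R) :
    act χ a = ∑ g, (χ g : F) • projg Rg hdec g a := by
  conv_lhs => rw [← sum_projg Rg hdec a]
  rw [map_sum]
  exact Finset.sum_congr rfl fun g _ => hact χ g _ (projg_mem Rg hdec g a)

include hact in
theorem projg_act (χ : G →* Fˣ) (g : G) (a : R) :
    projg Rg hdec g (act χ a) = (χ g : F) • projg Rg hdec g a := by
  rw [act_eq_sum Rg hdec act hact, map_sum]
  rw [Finset.sum_eq_single g]
  · rw [map_smul, projg_of_mem Rg hdec (projg_mem Rg hdec g a), if_pos rfl]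
  · intro g' _ hg'
    rw [map_smul, projg_of_mem Rg hdec (projg_mem Rg hdec g' a), if_neg (Ne.symm hg'), smul_zero]
  · intro h; exact absurd (Finset.mem_univ g) h

variable (Λ : Subgroup (G →* Fˣ))

/-- χ constant on cosets. -/
theorem chi_const {χ : G →* Fˣ} (hχ : χ ∈ Λ) {g g' : G}
    (h : (QuotientGroup.mk g : G ⧸ perpSubgroup (F := F) Λ) = QuotientGroup.mk g') :
    χ g = χ g' := by
  rw [QuotientGroup.eq] at h
  have h1 : χ (g⁻¹ * g') = 1 := h χ hχ
  rw [map_mul, map_inv] at h1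
  exact inv_mul_eq_one.mp h1

open scoped Classical in
noncomputable def px (x : G ⧸ perpSubgroup (F := F) Λ) : R →ₗ[F] R :=
  ∑ g ∈ Finset.univ.filter (fun g => (QuotientGroup.mk g : G ⧸ perpSubgroup (F := F) Λ) = x),
    projg Rg hdec g

open scoped Classical in
theorem px_apply (x : G ⧸ perpSubgroup (F := F) Λ) (a : R) :
    px Rg hdec Λ x a =
      ∑ g ∈ Finset.univ.filter
          (fun g => (QuotientGroup.mk g : G ⧸ perpSubgroup (F := F) Λ) = x),
        projg Rg hdec g a := by
  simp [px, LinearMap.sum_apply]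

theorem px_mem (x : G ⧸ perpSubgroup (F := F) Λ) (a : R) :
    px Rg hdec Λ x a ∈
      ⨆ (g : G) (_ : (QuotientGroup.mk g : G ⧸ perpSubgroup (F := F) Λ) = x), Rg g := by
  classical
  rw [px_apply]
  refine Submodule.sum_mem _ fun g hg => ?_
  rw [Finset.mem_filter] at hg
  exact Submodule.mem_iSup_of_mem g (Submodule.mem_iSup_of_mem hg.2 (projg_mem Rg hdec g a))

theorem sum_px [Fintype (G ⧸ perpSubgroup (F := F) Λ)] (a : R) :
    ∑ x : G ⧸ perpSubgroup (F := F) Λ, px Rg hdec Λ x a = a := by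
  classical
  calc ∑ x : G ⧸ perpSubgroup (F := F) Λ, px Rg hdec Λ x a
      = ∑ x : G ⧸ perpSubgroup (F := F) Λ, ∑ g ∈ Finset.univ.filter
          (fun g => (QuotientGroup.mk g : G ⧸ perpSubgroup (F := F) Λ) = x),
          projg Rg hdec g a := by
        exact Finset.sum_congr rfl fun x _ => px_apply Rg hdec Λ x a
    _ = ∑ g, projg Rg hdec g a := Finset.sum_fiberwise _ _ _
    _ = a := sum_projg Rg hdec a

theorem projg_eq_zero_of_mem_Rx {x : G ⧸ perpSubgroup (F := F) Λ} {a : R}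
    (ha : a ∈ ⨆ (g : G) (_ : (QuotientGroup.mk g : G ⧸ perpSubgroup (F := F) Λ) = x), Rg g)
    (g : G) (hg : (QuotientGroup.mk g : G ⧸ perpSubgroup (F := F) Λ) ≠ x) :
    projg Rg hdec g a = 0 := by
  classical
  revert g
  refine Submodule.iSup_induction
    (fun g : G => ⨆ (_ : (QuotientGroup.mk g : G ⧸ perpSubgroup (F := F) Λ) = x), Rg g)
    (motive := fun a => ∀ g, (QuotientGroup.mk g : G ⧸ perpSubgroup (F := F) Λ) ≠ x →
      projg Rg hdec g a = 0) ha ?_ ?_ ?_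
  · intro g₀ y hy g hg
    by_cases h : (QuotientGroup.mk g₀ : G ⧸ perpSubgroup (F := F) Λ) = x
    · simp only [iSup_pos h] at hy
      rw [projg_of_mem Rg hdec hy, if_neg]
      rintro rfl; exact hg h
    · simp only [iSup_neg h, Submodule.mem_bot] at hy
      rw [hy, map_zero]
  · intro g hg; rw [map_zero]
  · intro y z hy hz g hg; rw [map_add, hy g hg, hz g hg, add_zero]

theorem mem_Rx_of_projg {x : G ⧸ perpSubgroup (F := F) Λ} {a : R}
    (h : ∀ g, (QuotientGroup.mk g : G ⧸ perpSubgroup (F := F) Λ) ≠ x → projg Rg hdec g a = 0) :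
    a ∈ ⨆ (g : G) (_ : (QuotientGroup.mk g : G ⧸ perpSubgroup (F := F) Λ) = x), Rg g := by
  rw [← sum_projg Rg hdec a]
  refine Submodule.sum_mem _ fun g _ => ?_
  by_cases hg : (QuotientGroup.mk g : G ⧸ perpSubgroup (F := F) Λ) = x
  · exact Submodule.mem_iSup_of_mem g (Submodule.mem_iSup_of_mem hg (projg_mem Rg hdec g a))
  · rw [h g hg]; exact Submodule.zero_mem _

theorem px_eq_self_of_mem {x : G ⧸ perpSubgroup (F := F) Λ} {a : R}
    (ha : a ∈ ⨆ (g : G) (_ : (QuotientGroup.mk g : G ⧸ perpSubgroup (F := F) Λ) = x), Rg g) :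
    px Rg hdec Λ x a = a := by
  classical
  rw [px_apply Rg hdec Λ x a]
  conv_rhs => rw [← sum_projg Rg hdec a]
  refine Finset.sum_subset (Finset.filter_subset _ _) fun g _ hg => ?_
  rw [Finset.mem_filter] at hg
  push_neg at hg
  exact projg_eq_zero_of_mem_Rx Rg hdec Λ ha g (hg (Finset.mem_univ g))

include hdec hact in
theorem act_on_Rx {χ : G →* Fˣ} (hχ : χ ∈ Λ) {x : G ⧸ perpSubgroup (F := F) Λ} {a : R}
    (ha : a ∈ ⨆ (g : G) (_ : (QuotientGroup.mk g : G ⧸ perpSubgroup (F := F) Λ) = x), Rg g) :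
    act χ a = (χ (Quotient.out x) : F) • a := by
  classical
  rw [act_eq_sum Rg hdec act hact]
  have : ∀ g : G, (χ g : F) • projg Rg hdec g a
      = (χ (Quotient.out x) : F) • projg Rg hdec g a := by
    intro g
    by_cases hg : (QuotientGroup.mk g : G ⧸ perpSubgroup (F := F) Λ) = x
    · have : χ g = χ (Quotient.out x) := by
        refine chi_const Λ hχ ?_
        rw [hg, QuotientGroup.out_eq']
      rw [this]
    · rw [projg_eq_zero_of_mem_Rx Rg hdec Λ ha g hg, smul_zero, smul_zero]
  rw [Finset.sum_congr rfl fun g _ => this g, ← Finset.smul_sum, sum_projg Rg hdec a]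

include hact in
theorem px_act {χ : G →* Fˣ} (hχ : χ ∈ Λ) (x : G ⧸ perpSubgroup (F := F) Λ) (v : R) :
    px Rg hdec Λ x (act χ v) = (χ (Quotient.out x) : F) • px Rg hdec Λ x v := by
  classical
  rw [px_apply Rg hdec Λ x (act χ v), px_apply Rg hdec Λ x v, Finset.smul_sum]
  refine Finset.sum_congr rfl fun g hg => ?_
  rw [Finset.mem_filter] at hg
  rw [projg_act Rg hdec act hact]
  have : χ g = χ (Quotient.out x) := chi_const Λ hχ (by rw [hg.2, QuotientGroup.out_eq'])
  rw [this]

end Aux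

/-- Let `H = Λ^⊥` for a subgroup `Λ ≤ Ĝ`. An element `a ∈ R` is
homogeneous in the induced `G/H`-grading iff `a` is a common eigenvector for all
`χ ∈ Λ`, and a subspace `V` is `G/H`-graded iff `Λ * V ⊆ V`. -/
theorem quotient_graded_iff_subgroup_eigen
    {F G R : Type*} [Field F] [CommGroup G] [Fintype G] [DecidableEq G]
    [NonUnitalNonAssocRing R] [Module F R] [SMulCommClass F R R] [IsScalarTower F R R]
    (hroot : ∃ ζ : F, IsPrimitiveRoot ζ (Fintype.card G))
    (Rg : G → Submodule F R) (hdec : DirectSum.IsInternal Rg)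
    (hmul : ∀ g h : G, ∀ x ∈ Rg g, ∀ y ∈ Rg h, x * y ∈ Rg (g * h))
    (Λ : Subgroup (G →* Fˣ))
    (act : (G →* Fˣ) → R →ₗ[F] R)
    (hact : ∀ (χ : G →* Fˣ) (g : G), ∀ x ∈ Rg g, act χ x = (χ g : F) • x) :
    (∀ a : R,
      (∃ x : G ⧸ perpSubgroup (F := F) Λ,
          a ∈ ⨆ (g : G) (_ : (QuotientGroup.mk g : G ⧸ perpSubgroup (F := F) Λ) = x), Rg g) ↔
        ∀ χ ∈ Λ, ∃ c : F, act χ a = c • a) ∧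
    (∀ V : Submodule F R,
      (V = ⨆ x : G ⧸ perpSubgroup (F := F) Λ,
          V ⊓ ⨆ (g : G) (_ : (QuotientGroup.mk g : G ⧸ perpSubgroup (F := F) Λ) = x), Rg g) ↔
        ∀ χ ∈ Λ, ∀ v ∈ V, act χ v ∈ V) := by
  classical
  haveI : Fintype (G ⧸ perpSubgroup (F := F) Λ) := Fintype.ofFinite _
  constructor
  · intro a
    constructor
    · rintro ⟨x, hx⟩ χ hχ
      exact ⟨(χ (Quotient.out x) : F), act_on_Rx Rg hdec act hact Λ hχ hx⟩
    · intro h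
      by_cases ha : a = 0
      · exact ⟨QuotientGroup.mk 1, ha ▸ Submodule.zero_mem _⟩
      · have hex : ∃ g₀, projg Rg hdec g₀ a ≠ 0 := by
          by_contra h0
          push_neg at h0
          apply ha
          conv_lhs => rw [← sum_projg Rg hdec a]
          exact Finset.sum_eq_zero fun g _ => h0 g
        obtain ⟨g₀, hg₀⟩ := hex
        refine ⟨QuotientGroup.mk g₀, mem_Rx_of_projg Rg hdec Λ ?_⟩
        intro g hg
        by_contra hne
        apply hg
        rw [QuotientGroup.eq]
        intro χ hχ
        obtain ⟨c, hc⟩ := h χ hχ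
        have key : ∀ g' : G, (χ g' : F) • projg Rg hdec g' a = c • projg Rg hdec g' a := by
          intro g'
          have h2 := congrArg (projg Rg hdec g') hc
          rwa [projg_act Rg hdec act hact, map_smul] at h2
        have eval : ∀ g' : G, projg Rg hdec g' a ≠ 0 → (χ g' : F) = c := by
          intro g' hg'
          have h2 : ((χ g' : F) - c) • projg Rg hdec g' a = 0 := by
            rw [sub_smul, key g', sub_self]
          rcases smul_eq_zero.mp h2 with h3 | h3
          · exact sub_eq_zero.mp h3
          · exact absurd h3 hg'
        have e1 : (χ g : F) = c := eval g hne
        have e2 : (χ g₀ : F) = c := eval g₀ hg₀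
        have e3 : χ g = χ g₀ := Units.ext (by rw [e1, e2])
        rw [map_mul, map_inv, e3, inv_mul_cancel]
  · intro V
    constructor
    · intro hV χ hχ v hv
      rw [hV] at hv
      refine Submodule.iSup_induction
        (fun x : G ⧸ perpSubgroup (F := F) Λ =>
          V ⊓ ⨆ (g : G) (_ : (QuotientGroup.mk g : G ⧸ perpSubgroup (F := F) Λ) = x), Rg g)
        (motive := fun v => act χ v ∈ V) hv ?_ ?_ ?_
      · intro x y hy
        rw [Submodule.mem_inf] at hy
        show act χ y ∈ V
        rw [act_on_Rx Rg hdec act hact Λ hχ hy.2]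
        exact Submodule.smul_mem _ _ hy.1
      · show act χ (0 : R) ∈ V
        rw [map_zero]; exact V.zero_mem
      · intro y z hy hz
        show act χ (y + z) ∈ V
        rw [map_add]; exact V.add_mem hy hz
    · intro hV
      have key : ∀ n : ℕ, ∀ v ∈ V,
          (Finset.univ.filter (fun x => px Rg hdec Λ x v ≠ 0)).card ≤ n →
          ∀ x, px Rg hdec Λ x v ∈ V := by
        intro n
        induction n with
        | zero =>
          intro v hv hcard x
          rw [Nat.le_zero, Finset.card_eq_zero] at hcard
          have hzero : px Rg hdec Λ x v = 0 := by
            by_contra hne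
            have hx : x ∈ Finset.univ.filter (fun x => px Rg hdec Λ x v ≠ 0) :=
              Finset.mem_filter.mpr ⟨Finset.mem_univ x, hne⟩
            rw [hcard] at hx
            exact absurd hx (Finset.notMem_empty x)
          rw [hzero]
          exact V.zero_mem
        | succ n ih =>
          intro v hv hcard x
          by_cases h0 : px Rg hdec Λ x v = 0
          · rw [h0]; exact V.zero_mem
          by_cases hone : ∀ x', x' ≠ x → px Rg hdec Λ x' v = 0
          · have hxv : v = px Rg hdec Λ x v := by
              conv_lhs => rw [← sum_px Rg hdec Λ v]
              exact Finset.sum_eq_single x (fun x' _ hx' => hone x' hx')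
                (fun hx => absurd (Finset.mem_univ x) hx)
            rwa [← hxv]
          · push_neg at hone
            obtain ⟨x'', hx''ne, hx''⟩ := hone
            have hsep : ∃ χ ∈ Λ, χ (Quotient.out x) ≠ χ (Quotient.out x'') := by
              by_contra hcon
              push_neg at hcon
              have heq : (QuotientGroup.mk (Quotient.out x) :
                  G ⧸ perpSubgroup (F := F) Λ) = QuotientGroup.mk (Quotient.out x'') := by
                rw [QuotientGroup.eq]
                intro χ hχ
                rw [map_mul, map_inv, hcon χ hχ, inv_mul_cancel]
              rw [QuotientGroup.out_eq', QuotientGroup.out_eq'] at heq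
              exact hx''ne heq.symm
            obtain ⟨χ, hχ, hnechi⟩ := hsep
            set u : F := (χ (Quotient.out x'') : F) with hu
            set w : R := act χ v - u • v with hw
            have hwV : w ∈ V := V.sub_mem (hV χ hχ v hv) (V.smul_mem u hv)
            have hpxw : ∀ x', px Rg hdec Λ x' w
                = ((χ (Quotient.out x') : F) - u) • px Rg hdec Λ x' v := by
              intro x'
              rw [hw, map_sub, map_smul, px_act Rg hdec act hact Λ hχ, sub_smul]
            have hsubset : Finset.univ.filter (fun x' => px Rg hdec Λ x' w ≠ 0)
                ⊆ (Finset.univ.filter (fun x' => px Rg hdec Λ x' v ≠ 0)).erase x'' := by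
              intro x' hx'
              rw [Finset.mem_filter] at hx'
              rw [Finset.mem_erase, Finset.mem_filter]
              refine ⟨?_, Finset.mem_univ _, ?_⟩
              · rintro rfl
                exact hx'.2 (by rw [hpxw x', ← hu, sub_self, zero_smul])
              · intro hzero
                exact hx'.2 (by rw [hpxw x', hzero, smul_zero])
            have hmemv : x'' ∈ Finset.univ.filter (fun x' => px Rg hdec Λ x' v ≠ 0) :=
              Finset.mem_filter.mpr ⟨Finset.mem_univ _, hx''⟩
            have hcard2 : (Finset.univ.filter (fun x' => px Rg hdec Λ x' w ≠ 0)).card ≤ n := by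
              have h1 := Finset.card_le_card hsubset
              rw [Finset.card_erase_of_mem hmemv] at h1
              omega
            have hxw := ih w hwV hcard2 x
            rw [hpxw x] at hxw
            have hc : (χ (Quotient.out x) : F) - u ≠ 0 :=
              sub_ne_zero.mpr (fun h => hnechi (Units.ext h))
            have hfin := inv_smul_smul₀ hc (px Rg hdec Λ x v)
            rw [← hfin]
            exact V.smul_mem _ hxw
      refine le_antisymm ?_ (iSup_le fun x => inf_le_left)
      intro v hv
      have hsum := sum_px Rg hdec Λ v
      rw [← hsum]
      refine Submodule.sum_mem _ fun x _ => Submodule.mem_iSup_of_mem x ?_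
      exact Submodule.mem_inf.mpr
        ⟨key _ v hv le_rfl x, px_mem Rg hdec Λ x v⟩
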